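/- Let G be a graph with a magnetic field vector M_i ∈ ℂ^q at each vertex v_i, Hamiltonian h(σ) = −Σ_{{i,j}∈E} J_{i,j} δ(σ_i, σ_j) − Σ_{v_i∈V(G)} Σ_{α=1}^q M_{i,α} δ(α, σ_i), and partition function Z(G) = Σ_{σ: V(G)→{1,…,q}} e^{−β h(σ)}. Then for any non-loop edge e = {v_i, v_j}, Z(G) = Z(G−e) + (e^{β J_{i,j}} − 1)·Z(G/e), where in G/e the new vertex carries magnetic weight vector M_i + M_j. -/

import Mathlib

open Finset

structure WGraph (S : Type) (L : Type) where
  V : Type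
  E : Type
  [fV : Fintype V]
  [dV : DecidableEq V]
  [fE : Fintype E]
  [dE : DecidableEq E]
  ends : E → V × V
  ω : V → S
  γ : E → L

attribute [instance] WGraph.fV WGraph.dV WGraph.fE WGraph.dE

namespace WGraph
variable {S L : Type}

def IsLoop (G : WGraph S L) (e : G.E) : Prop := (G.ends e).1 = (G.ends e).2

def delete (G : WGraph S L) (e₀ : G.E) : WGraph S L where
  V := G.V
  E := {e : G.E // e ≠ e₀}
  ends := fun e => G.ends e.1
  ω := G.ω
  γ := fun e => G.γ e.1

def contract [Add S] (G : WGraph S L) (e₀ : G.E) (h : ¬ G.IsLoop e₀) : WGraph S L where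
  V := {v : G.V // v ≠ (G.ends e₀).2}
  E := {e : G.E // e ≠ e₀}
  ends := fun e =>
    ((if hv : (G.ends e.1).1 = (G.ends e₀).2 then ⟨(G.ends e₀).1, h⟩
        else ⟨(G.ends e.1).1, hv⟩ : {v : G.V // v ≠ (G.ends e₀).2}),
     (if hv : (G.ends e.1).2 = (G.ends e₀).2 then ⟨(G.ends e₀).1, h⟩
        else ⟨(G.ends e.1).2, hv⟩))
  ω := fun v =>
    if v.1 = (G.ends e₀).1 then G.ω (G.ends e₀).1 + G.ω (G.ends e₀).2 else G.ω v.1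
  γ := fun e => G.γ e.1

def mapEdges {L' : Type} (G : WGraph S L) (φ : L → L') : WGraph S L' where
  V := G.V
  E := G.E
  ends := G.ends
  ω := G.ω
  γ := φ ∘ G.γ

def stateGraph (G : WGraph S L) (A : Finset G.E) : SimpleGraph G.V :=
  SimpleGraph.fromRel (fun v w => ∃ e ∈ A, G.ends e = (v, w))

noncomputable instance (G : WGraph S L) (A : Finset G.E) :
    Fintype (G.stateGraph A).ConnectedComponent := Fintype.ofFinite _

noncomputable def kcomp (G : WGraph S L) (A : Finset G.E) : ℕ :=
  Fintype.card (G.stateGraph A).ConnectedComponent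

open scoped Classical in
noncomputable def compWeight [AddCommMonoid S] (G : WGraph S L) (A : Finset G.E)
    (c : (G.stateGraph A).ConnectedComponent) : S :=
  ∑ v ∈ Finset.univ.filter (fun v => (G.stateGraph A).connectedComponentMk v = c), G.ω v

end WGraph

/-- The variable-field q-state Potts Hamiltonian:
`h(σ) = -Σ_{e={i,j}} J_e δ(σ_i,σ_j) - Σ_i Σ_α M_{i,α} δ(α,σ_i)`. -/
noncomputable def pottsH (q : ℕ) (G : WGraph (Fin q → ℂ) ℂ) (σ : G.V → Fin q) : ℂ :=
  -(∑ e : G.E, G.γ e * (if σ (G.ends e).1 = σ (G.ends e).2 then 1 else 0))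
    - ∑ v : G.V, ∑ α : Fin q, G.ω v α * (if α = σ v then 1 else 0)

/-- The variable-field q-state Potts partition function `Z(G) = Σ_σ e^{-β h(σ)}`. -/
noncomputable def pottsZ (q : ℕ) (β : ℂ) (G : WGraph (Fin q → ℂ) ℂ) : ℂ :=
  ∑ σ : G.V → Fin q, Complex.exp (-β * pottsH q G σ)

section Aux
variable (q : ℕ) (β : ℂ)

lemma sum_split_subtype {ι : Type} [Fintype ι] [DecidableEq ι] (e : ι) (f : ι → ℂ) :
    (∑ x : ι, f x) = f e + ∑ x : {x : ι // x ≠ e}, f x.1 := by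
  rw [← Finset.add_sum_erase _ f (Finset.mem_univ e)]
  congr 1
  rw [Finset.sum_subtype (p := fun x => x ≠ e) (Finset.univ.erase e)
    (fun x => by simp [Finset.mem_erase]) f]

lemma pottsH_delete (G : WGraph (Fin q → ℂ) ℂ) (e : G.E) (σ : G.V → Fin q) :
    pottsH q G σ =
      -(G.γ e * (if σ (G.ends e).1 = σ (G.ends e).2 then 1 else 0))
        + pottsH q (G.delete e) σ := by
  simp only [pottsH, WGraph.delete]
  rw [sum_split_subtype e (fun e' => G.γ e' * (if σ (G.ends e').1 = σ (G.ends e').2 then 1 else 0))]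
  ring_nf
  rfl

end Aux

section Aux2
variable (q : ℕ) (β : ℂ)

lemma pottsH_contract (G : WGraph (Fin q → ℂ) ℂ) (e : G.E) (h : ¬ G.IsLoop e)
    (σ : G.V → Fin q) (hσ : σ (G.ends e).1 = σ (G.ends e).2) :
    pottsH q (G.delete e) σ = pottsH q (G.contract e h) (fun v => σ v.1) := by
  have hne : (G.ends e).1 ≠ (G.ends e).2 := h
  simp only [pottsH, WGraph.delete, WGraph.contract]
  congr 1
  · -- edge sums
    congr 1
    apply Finset.sum_congr rfl
    intro e' _
    congr 1
    by_cases ha : (G.ends ↑e').1 = (G.ends e).2 <;> by_cases hb : (G.ends ↑e').2 = (G.ends e).2 <;> simp_all <;> rfl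
  · -- vertex sums
    erw [sum_split_subtype (G.ends e).2
      (fun v => ∑ α : Fin q, G.ω v α * (if α = σ v then 1 else 0))]
    have key : ∀ v : {v : G.V // v ≠ (G.ends e).2},
        (∑ α : Fin q,
          (if v.1 = (G.ends e).1 then G.ω (G.ends e).1 + G.ω (G.ends e).2 else G.ω v.1) α *
            (if α = σ v.1 then 1 else 0)) =
        (∑ α : Fin q, G.ω v.1 α * (if α = σ v.1 then 1 else 0)) +
          (if v = (⟨(G.ends e).1, hne⟩ : {v : G.V // v ≠ (G.ends e).2}) then
            ∑ α : Fin q, G.ω (G.ends e).2 α * (if α = σ (G.ends e).2 then 1 else 0) else 0) := by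
      intro v
      by_cases hv : v.1 = (G.ends e).1
      · have hv' : v = ⟨(G.ends e).1, hne⟩ := Subtype.ext hv
        simp only [hv, hv', eq_self_iff_true, if_true, Pi.add_apply]
        rw [← Finset.sum_add_distrib]
        congr 1
        funext α
        rw [← hσ]
        ring
      · have hv' : v ≠ ⟨(G.ends e).1, hne⟩ := fun hc => hv (by rw [hc])
        simp [hv, hv']
    erw [Finset.sum_congr rfl (fun v _ => key v), Finset.sum_add_distrib,
      Finset.sum_ite_eq' Finset.univ (⟨(G.ends e).1, hne⟩ : {v : G.V // v ≠ (G.ends e).2})]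
    simp [add_comm]
    rfl

end Aux2

theorem pottsZ_deletion_contraction' (q : ℕ) (β : ℂ) (G : WGraph (Fin q → ℂ) ℂ)
    (e : G.E) (h : ¬ G.IsLoop e) :
    (∑ σ : G.V → Fin q, Complex.exp (-β * pottsH q G σ)) =
      (∑ σ : (G.delete e).V → Fin q, Complex.exp (-β * pottsH q (G.delete e) σ)) +
        (Complex.exp (β * G.γ e) - 1) *
          ∑ σ : (G.contract e h).V → Fin q, Complex.exp (-β * pottsH q (G.contract e h) σ) := by
  classical
  have hne : (G.ends e).1 ≠ (G.ends e).2 := h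
  have hfac : ∀ σ : G.V → Fin q, Complex.exp (-β * pottsH q G σ) =
      Complex.exp (-β * pottsH q (G.delete e) σ) +
        (Complex.exp (β * G.γ e) - 1) *
          (if σ (G.ends e).1 = σ (G.ends e).2 then
            Complex.exp (-β * pottsH q (G.delete e) σ) else 0) := by
    intro σ
    rw [pottsH_delete q G e σ, mul_add, Complex.exp_add]
    split_ifs with hc
    · rw [mul_one, show -β * -G.γ e = β * G.γ e from by ring]; ring
    · rw [mul_zero, neg_zero, mul_zero, Complex.exp_zero]; ring
  rw [Finset.sum_congr rfl (fun σ _ => hfac σ), Finset.sum_add_distrib, ← Finset.mul_sum]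
  congr 1
  congr 1
  rw [← Finset.sum_filter]
  refine Finset.sum_nbij' (fun σ => fun v => σ v.1)
    (fun τ => fun v => if hv : v = (G.ends e).2 then τ ⟨(G.ends e).1, hne⟩ else τ ⟨v, hv⟩)
    ?_ ?_ ?_ ?_ ?_
  · intro σ _; exact Finset.mem_univ _
  · intro τ _
    simp [hne]
  · intro σ hσ
    simp only [Finset.mem_filter, Finset.mem_univ, true_and] at hσ
    funext v
    by_cases hv : v = (G.ends e).2
    · subst hv; simp [hσ]
    · simp [hv]
  · intro τ _
    funext v
    simp [v.2]
    rfl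
  · intro σ hσ
    simp only [Finset.mem_filter, Finset.mem_univ, true_and] at hσ
    rw [pottsH_contract q G e h σ hσ]

/-- deletion-contraction for the variable-field Potts partition function at a
non-loop edge: `Z(G) = Z(G-e) + (e^{βJ_e}-1) Z(G/e)`, the contracted vertex carrying the sum
of the two magnetic weight vectors. -/
theorem pottsZ_deletion_contraction (q : ℕ) (β : ℂ) (G : WGraph (Fin q → ℂ) ℂ)
    (e : G.E) (h : ¬ G.IsLoop e) :
    pottsZ q β G =
      pottsZ q β (G.delete e) +
        (Complex.exp (β * G.γ e) - 1) * pottsZ q β (G.contract e h) :=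
  pottsZ_deletion_contraction' q β G e h
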